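/- Let p be a prime, γ ≥ 1 an integer, and C a nonempty subset of ℤ/p^γℤ. Suppose #C ≤ p^n for some integer 1 ≤ n ≤ γ and there exist integers 1 ≤ i_1 < i_2 < … < i_n ≤ γ such that ∑_{c∈C} e^{2πi c̃ / p^{i_k}} = 0 for every 1 ≤ k ≤ n, where c̃ denotes any integer lift of c. Then #C = p^n, and for every integer 0 ≤ m ≤ γ the image of C in ℤ/p^mℤ has cardinality exactly p^{#{k ∈ {1,…,n} : i_k ≤ m}} (so C is p-homogeneous). -/

import Mathlib

open Finset

noncomputable section

lemma sum_range_mul_reindex {M : Type*} [AddCommMonoid M] (f : ℕ → M) (a b : ℕ) :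
    ∑ e ∈ Finset.range (a * b), f e
      = ∑ j ∈ Finset.range b, ∑ r ∈ Finset.range a, f (j * a + r) := by
  induction b with
  | zero => simp
  | succ b ih =>
      rw [Nat.mul_succ, Finset.sum_range_add, ih, Finset.sum_range_succ]
      simp [Nat.mul_comm]

open Polynomial in
lemma key_fiber_const (p : ℕ) (hp : p.Prime) (t : ℕ) (ht : 1 ≤ t) (N : ℕ → ℤ)
    (h : ∑ e ∈ Finset.range (p ^ t),
        (N e : ℂ) * Complex.exp (2 * Real.pi * Complex.I / ((p : ℂ) ^ t)) ^ e = 0) :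
    ∀ r j, r < p ^ (t - 1) → j < p → N (r + j * p ^ (t - 1)) = N r := by
  have hp2 : 2 ≤ p := hp.two_le
  obtain ⟨p', rfl⟩ : ∃ p', p = p' + 1 := ⟨p - 1, by omega⟩
  set p : ℕ := p' + 1 with hpdef
  have hp'1 : 1 ≤ p' := by omega
  set q : ℕ := p ^ (t - 1) with hq
  have hq0 : 0 < q := pow_pos (by omega) _
  have hqp : p ^ t = q * p := by
    rw [hq, ← pow_succ, Nat.sub_add_cancel ht]
  have hpt0 : (p ^ t : ℕ) ≠ 0 := (pow_pos (by omega) t).ne'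
  set ζ : ℂ := Complex.exp (2 * Real.pi * Complex.I / ((p : ℂ) ^ t)) with hzeta
  have hζ : IsPrimitiveRoot ζ (p ^ t) := by
    have := Complex.isPrimitiveRoot_exp (p ^ t) hpt0
    convert this using 3
    push_cast; ring
  have hζ1 : ζ ^ (p ^ t) = 1 := hζ.pow_eq_one
  have hη : (ζ ^ q) ^ p = 1 := by rw [← pow_mul, ← hqp, hζ1]
  have hη1 : ζ ^ q ≠ 1 :=
    hζ.pow_ne_one_of_pos_of_lt hq0.ne' (by rw [hqp]; nlinarith)
  have hgeom : ∀ r : ℕ, ∑ j ∈ Finset.range p, ζ ^ (j * q + r) = 0 := by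
    intro r
    have : ∑ j ∈ Finset.range p, ζ ^ (j * q + r)
        = (∑ j ∈ Finset.range p, (ζ ^ q) ^ j) * ζ ^ r := by
      rw [Finset.sum_mul]
      refine Finset.sum_congr rfl fun j _ => ?_
      rw [pow_add, pow_mul']
    rw [this, geom_sum_eq hη1, hη, sub_self, zero_div, zero_mul]
  have hinner : ∀ r : ℕ, ∑ j ∈ Finset.range p', ζ ^ (j * q + r) = - ζ ^ (p' * q + r) := by
    intro r
    have h1 := hgeom r
    rw [show p = p' + 1 from rfl, Finset.sum_range_succ] at h1
    linear_combination h1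
  set d : ℕ → ℤ := fun e => N e - N (e % q + p' * q) with hd
  have hS : ∑ e ∈ Finset.range (q * p'), (d e : ℂ) * ζ ^ e = 0 := by
    have hsplit : q * p' + q = p ^ t := by rw [hqp]; ring
    have h0 : (∑ e ∈ Finset.range (q * p'), (N e : ℂ) * ζ ^ e)
        + ∑ e ∈ Finset.range q, (N (q * p' + e) : ℂ) * ζ ^ (q * p' + e) = 0 := by
      rw [← Finset.sum_range_add, hsplit]; exact h
    have hB : ∑ e ∈ Finset.range (q * p'), (N (e % q + p' * q) : ℂ) * ζ ^ e
        = - ∑ r ∈ Finset.range q, (N (r + p' * q) : ℂ) * ζ ^ (p' * q + r) := by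
      rw [sum_range_mul_reindex (fun e => (N (e % q + p' * q) : ℂ) * ζ ^ e) q p']
      rw [Finset.sum_comm]
      rw [← Finset.sum_neg_distrib]
      refine Finset.sum_congr rfl fun r hr => ?_
      rw [Finset.mem_range] at hr
      have hmod : ∀ j : ℕ, (j * q + r) % q = r := fun j => by
        rw [Nat.add_comm, Nat.add_mul_mod_self_right]; exact Nat.mod_eq_of_lt hr
      calc ∑ j ∈ Finset.range p', (N ((j * q + r) % q + p' * q) : ℂ) * ζ ^ (j * q + r)
          = (N (r + p' * q) : ℂ) * ∑ j ∈ Finset.range p', ζ ^ (j * q + r) := by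
            rw [Finset.mul_sum]
            exact Finset.sum_congr rfl fun j _ => by rw [hmod j]
        _ = - ((N (r + p' * q) : ℂ) * ζ ^ (p' * q + r)) := by rw [hinner r]; ring
    have hexp : ∀ e ∈ Finset.range (q * p'), (d e : ℂ) * ζ ^ e
        = (N e : ℂ) * ζ ^ e - (N (e % q + p' * q) : ℂ) * ζ ^ e := by
      intro e _; rw [hd]; push_cast; ring
    rw [Finset.sum_congr rfl hexp, Finset.sum_sub_distrib, hB]
    have : ∑ e ∈ Finset.range q, (N (q * p' + e) : ℂ) * ζ ^ (q * p' + e)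
        = ∑ r ∈ Finset.range q, (N (r + p' * q) : ℂ) * ζ ^ (p' * q + r) := by
      refine Finset.sum_congr rfl fun r _ => ?_
      rw [show q * p' + r = r + p' * q by ring]
      rw [show (ζ : ℂ) ^ (r + p' * q) = ζ ^ (p' * q + r) by rw [Nat.add_comm]]
    rw [← this]
    linear_combination h0
  -- polynomial argument
  set g : Polynomial ℚ := ∑ e ∈ Finset.range (q * p'), Polynomial.C ((d e : ℚ)) * X ^ e with hg
  have hcoeff : ∀ e' : ℕ, g.coeff e' = if e' ∈ Finset.range (q * p') then (d e' : ℚ) else 0 := by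
    intro e'
    rw [hg, Polynomial.finset_sum_coeff]
    rw [Finset.sum_congr rfl (fun e _ => by
      rw [Polynomial.coeff_C_mul, Polynomial.coeff_X_pow, mul_ite, mul_one, mul_zero])]
    exact Finset.sum_ite_eq (Finset.range (q * p')) e' (fun e => (d e : ℚ))
  have haeval : Polynomial.aeval ζ g = 0 := by
    rw [hg, map_sum]
    rw [Finset.sum_congr rfl (fun e _ => by
      rw [map_mul, map_pow, Polynomial.aeval_C, Polynomial.aeval_X])]
    have : ∀ e : ℕ, (algebraMap ℚ ℂ) ((d e : ℚ)) = (d e : ℂ) := fun e => by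
      push_cast; simp
    rw [Finset.sum_congr rfl (fun e _ => by rw [this e])]
    exact hS
  have hgzero : g = 0 := by
    by_contra hne
    have hint : IsIntegral ℚ ζ := (hζ.isIntegral (by positivity)).tower_top
    have hdvd : minpoly ℚ ζ ∣ g := minpoly.dvd ℚ ζ haeval
    have hdeg1 : (minpoly ℚ ζ).natDegree ≤ g.natDegree := Polynomial.natDegree_le_of_dvd hdvd hne
    have hmin : (minpoly ℚ ζ).natDegree = q * p' := by
      rw [← Polynomial.cyclotomic_eq_minpoly_rat hζ (by positivity),
        Polynomial.natDegree_cyclotomic, Nat.totient_prime_pow hp (by omega)]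
      rw [show p - 1 = p' from by omega, hq]
    have hdeg2 : g.natDegree ≤ q * p' - 1 := by
      rw [hg]
      refine Polynomial.natDegree_sum_le_of_forall_le _ _ fun e he => ?_
      rw [Finset.mem_range] at he
      calc (Polynomial.C ((d e : ℚ)) * X ^ e).natDegree ≤ (X ^ e : Polynomial ℚ).natDegree :=
            Polynomial.natDegree_C_mul_le _ _
        _ = e := Polynomial.natDegree_X_pow e
        _ ≤ q * p' - 1 := by omega
    have hqp' : 0 < q * p' := by positivity
    omega
  have hzero : ∀ e, e < q * p' → N e = N (e % q + p' * q) := by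
    intro e he
    have := hcoeff e
    rw [hgzero] at this
    simp only [Polynomial.coeff_zero, Finset.mem_range, he, if_true] at this
    have : (d e : ℚ) = 0 := this.symm
    have hde : d e = 0 := by exact_mod_cast this
    simp only [hd] at hde
    omega
  intro r j hr hj
  have hbase : N r = N (r + p' * q) := by
    have h1 := hzero r (by nlinarith)
    rwa [Nat.mod_eq_of_lt hr] at h1
  rcases Nat.lt_or_ge j p' with hjp | hjp
  · have h1 := hzero (r + j * q) (by nlinarith)
    rw [Nat.add_mul_mod_self_right, Nat.mod_eq_of_lt hr] at h1
    rw [h1, ← hbase]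
  · have : j = p' := by omega
    rw [this, ← hbase]


lemma level_count (p γ : ℕ) (hp : p.Prime) (t : ℕ) (ht1 : 1 ≤ t)
    (C : Finset (ZMod (p ^ γ)))
    (h : ∑ c ∈ C, Complex.exp (2 * Real.pi * Complex.I * ((c.val : ℂ) / (p : ℂ) ^ t)) = 0) :
    ∀ r j, r < p ^ (t - 1) → j < p →
      (C.filter fun c => c.val % p ^ t = r + j * p ^ (t - 1)).card
        = (C.filter fun c => c.val % p ^ t = r).card := by
  set ζ : ℂ := Complex.exp (2 * Real.pi * Complex.I / ((p : ℂ) ^ t)) with hzeta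
  have hpt0 : (p ^ t : ℕ) ≠ 0 := (pow_pos hp.pos t).ne'
  have hζ : IsPrimitiveRoot ζ (p ^ t) := by
    have := Complex.isPrimitiveRoot_exp (p ^ t) hpt0
    convert this using 3
    push_cast; ring
  have hζ1 : ζ ^ (p ^ t) = 1 := hζ.pow_eq_one
  have hterm : ∀ c : ZMod (p ^ γ),
      Complex.exp (2 * Real.pi * Complex.I * ((c.val : ℂ) / (p : ℂ) ^ t))
        = ζ ^ (c.val % p ^ t) := by
    intro c
    have h1 : (2 : ℂ) * Real.pi * Complex.I * ((c.val : ℂ) / (p : ℂ) ^ t)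
        = (c.val : ℕ) * (2 * Real.pi * Complex.I / ((p : ℂ) ^ t)) := by
      push_cast; ring
    rw [h1, Complex.exp_nat_mul, ← hzeta, pow_eq_pow_mod _ hζ1]
  set N : ℕ → ℤ := fun e => ((C.filter fun c => c.val % p ^ t = e).card : ℤ) with hN
  have hmaps : ∀ c ∈ C, c.val % p ^ t ∈ Finset.range (p ^ t) := fun c _ =>
    Finset.mem_range.mpr (Nat.mod_lt _ (pow_pos hp.pos t))
  have hsum2 : ∑ e ∈ Finset.range (p ^ t), (N e : ℂ) * ζ ^ e = 0 := by
    calc ∑ e ∈ Finset.range (p ^ t), (N e : ℂ) * ζ ^ e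
        = ∑ e ∈ Finset.range (p ^ t), ∑ c ∈ C.filter (fun c => c.val % p ^ t = e),
            ζ ^ (c.val % p ^ t) := by
          refine Finset.sum_congr rfl fun e _ => ?_
          rw [Finset.sum_congr rfl (fun c hc => by
            rw [(Finset.mem_filter.mp hc).2]), Finset.sum_const, nsmul_eq_mul, hN]
          push_cast; ring
      _ = ∑ c ∈ C, ζ ^ (c.val % p ^ t) := Finset.sum_fiberwise_of_maps_to hmaps _
      _ = 0 := by rw [← Finset.sum_congr rfl fun c _ => hterm c]; exact h
  have hkey := key_fiber_const p hp t ht1 N hsum2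
  intro r j hr hj
  have h2 := hkey r j hr hj
  simp only [hN] at h2
  exact_mod_cast h2

lemma card_image_eq_card_S (p γ m : ℕ) (hp : 0 < p) (C : Finset (ZMod (p ^ γ))) :
    (C.image fun c => ((c.val : ZMod (p ^ m)))).card
      = ((Finset.range (p ^ m)).filter fun e => ∃ c ∈ C, c.val % p ^ m = e).card := by
  have hpm : 0 < p ^ m := pow_pos hp m
  haveI : NeZero (p ^ m) := ⟨hpm.ne'⟩
  refine (Finset.card_nbij (s := (Finset.range (p ^ m)).filter fun e => ∃ c ∈ C, c.val % p ^ m = e)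
    (t := C.image fun c => ((c.val : ZMod (p ^ m)))) (fun e => ((e : ZMod (p ^ m)))) ?_ ?_ ?_).symm
  · intro e he
    simp only [Finset.mem_coe, Finset.mem_filter, Finset.mem_range] at he
    obtain ⟨he1, c, hc, hce⟩ := he
    refine Finset.mem_image.mpr ⟨c, hc, ?_⟩
    rw [← hce]
    show (c.val : ZMod (p ^ m)) = ((c.val % p ^ m : ℕ) : ZMod (p ^ m))
    exact (ZMod.natCast_mod _ _).symm
  · intro e he e' he' hee
    simp only [Finset.coe_filter, Set.mem_setOf_eq, Finset.mem_range] at he he'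
    have h1 : (e : ZMod (p ^ m)).val = (e' : ZMod (p ^ m)).val := congrArg ZMod.val hee
    rwa [ZMod.val_natCast, ZMod.val_natCast, Nat.mod_eq_of_lt he.1,
      Nat.mod_eq_of_lt he'.1] at h1
  · intro x hx
    simp only [Finset.coe_image, Set.mem_image] at hx
    obtain ⟨c, hc, rfl⟩ := hx
    refine ⟨c.val % p ^ m, ?_, ?_⟩
    · simp only [Finset.coe_filter, Set.mem_setOf_eq, Finset.mem_range]
      exact ⟨Nat.mod_lt _ hpm, c, hc, rfl⟩
    · show ((c.val % p ^ m : ℕ) : ZMod (p ^ m)) = (c.val : ZMod (p ^ m))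
      exact ZMod.natCast_mod _ _


lemma S_card_mul (p γ t : ℕ) (hp : p.Prime) (ht1 : 1 ≤ t) (C : Finset (ZMod (p ^ γ)))
    (hkey : ∀ r j, r < p ^ (t - 1) → j < p →
      (C.filter fun c => c.val % p ^ t = r + j * p ^ (t - 1)).card
        = (C.filter fun c => c.val % p ^ t = r).card) :
    ((Finset.range (p ^ t)).filter fun e => ∃ c ∈ C, c.val % p ^ t = e).card
      = p * ((Finset.range (p ^ (t - 1))).filter
          fun e => ∃ c ∈ C, c.val % p ^ (t - 1) = e).card := by
  set q : ℕ := p ^ (t - 1) with hq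
  have hq0 : 0 < q := pow_pos hp.pos _
  have hqp : p ^ t = q * p := by rw [hq, ← pow_succ, Nat.sub_add_cancel ht1]
  have hdvd : q ∣ p ^ t := by rw [hqp]; exact Dvd.intro p rfl
  set St := (Finset.range (p ^ t)).filter fun e => ∃ c ∈ C, c.val % p ^ t = e with hSt
  set Sq := (Finset.range q).filter fun e => ∃ c ∈ C, c.val % q = e with hSq
  have hmaps : ∀ e ∈ St, e % q ∈ Sq := by
    intro e he
    rw [hSt, Finset.mem_filter, Finset.mem_range] at he
    obtain ⟨he1, c, hc, hce⟩ := he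
    rw [hSq, Finset.mem_filter, Finset.mem_range]
    exact ⟨Nat.mod_lt _ hq0, c, hc, by rw [← hce, Nat.mod_mod_of_dvd _ hdvd]⟩
  rw [Finset.card_eq_sum_card_fiberwise hmaps]
  have hfib : ∀ r ∈ Sq, (St.filter fun e => e % q = r).card = p := by
    intro r hr
    rw [hSq, Finset.mem_filter, Finset.mem_range] at hr
    obtain ⟨hrq, c₀, hc₀, hc₀r⟩ := hr
    -- the seed: residue of c₀ at level t
    have hNr : 0 < (C.filter fun c => c.val % p ^ t = r).card := by
      set e₀ := c₀.val % p ^ t with he₀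
      have he₀q : e₀ % q = r := by rw [he₀, Nat.mod_mod_of_dvd _ hdvd, hc₀r]
      have he₀lt : e₀ < p ^ t := Nat.mod_lt _ (pow_pos hp.pos t)
      have hdiv : e₀ / q < p := by
        rw [Nat.div_lt_iff_lt_mul hq0]; rw [hqp] at he₀lt; exact lt_of_lt_of_le he₀lt (by ring_nf; exact le_refl _)
      have hrep : e₀ = r + (e₀ / q) * q := by
        conv_lhs => rw [← Nat.mod_add_div e₀ q]
        rw [he₀q]; ring
      have h1 : 0 < (C.filter fun c => c.val % p ^ t = e₀).card :=
        Finset.card_pos.mpr ⟨c₀, Finset.mem_filter.mpr ⟨hc₀, rfl⟩⟩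
      rw [hrep] at h1
      rwa [hkey r (e₀ / q) hrq hdiv] at h1
    have hset : St.filter (fun e => e % q = r) = (Finset.range p).image fun j => r + j * q := by
      ext e
      constructor
      · intro he
        rw [Finset.mem_filter] at he
        obtain ⟨heSt, herq⟩ := he
        rw [hSt, Finset.mem_filter, Finset.mem_range] at heSt
        refine Finset.mem_image.mpr ⟨e / q, Finset.mem_range.mpr ?_, ?_⟩
        · rw [Nat.div_lt_iff_lt_mul hq0]; rw [hqp] at heSt
          exact lt_of_lt_of_le heSt.1 (by ring_nf; exact le_refl _)
        · conv_rhs => rw [← Nat.mod_add_div e q]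
          rw [herq]; ring
      · intro he
        obtain ⟨j, hj, rfl⟩ := Finset.mem_image.mp he
        rw [Finset.mem_range] at hj
        have helt : r + j * q < p ^ t := by rw [hqp]; nlinarith
        have hmod : (r + j * q) % q = r := by
          rw [Nat.add_mul_mod_self_right]; exact Nat.mod_eq_of_lt hrq
        refine Finset.mem_filter.mpr ⟨?_, hmod⟩
        rw [hSt, Finset.mem_filter, Finset.mem_range]
        refine ⟨helt, ?_⟩
        have h2 : 0 < (C.filter fun c => c.val % p ^ t = r + j * q).card := by
          rw [hkey r j hrq hj]; exact hNr
        obtain ⟨c, hc⟩ := Finset.card_pos.mp h2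
        rw [Finset.mem_filter] at hc
        exact ⟨c, hc.1, hc.2⟩
    rw [hset, Finset.card_image_of_injOn, Finset.card_range]
    intro j _ j' _ hjj
    simp only at hjj
    exact Nat.eq_of_mul_eq_mul_right hq0 (by omega)
  rw [Finset.sum_congr rfl hfib, Finset.sum_const, smul_eq_mul, Nat.mul_comm]

lemma S_mono (p γ : ℕ) (hp : 0 < p) (C : Finset (ZMod (p ^ γ))) {m m' : ℕ} (h : m ≤ m') :
    ((Finset.range (p ^ m)).filter fun e => ∃ c ∈ C, c.val % p ^ m = e).card
      ≤ ((Finset.range (p ^ m')).filter fun e => ∃ c ∈ C, c.val % p ^ m' = e).card := by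
  have hdvd : p ^ m ∣ p ^ m' := pow_dvd_pow p h
  refine Finset.card_le_card_of_surjOn (fun e => e % p ^ m) ?_
  intro e he
  simp only [Finset.coe_filter, Set.mem_setOf_eq, Finset.mem_range] at he
  obtain ⟨he1, c, hc, hce⟩ := he
  refine ⟨c.val % p ^ m', ?_, ?_⟩
  · simp only [Finset.coe_filter, Set.mem_setOf_eq, Finset.mem_range]
    exact ⟨Nat.mod_lt _ (pow_pos hp m'), c, hc, rfl⟩
  · show c.val % p ^ m' % p ^ m = e
    rw [Nat.mod_mod_of_dvd _ hdvd, hce]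


/-- if `#C ≤ p^n` and there are `1 ≤ i_1 < ⋯ < i_n ≤ γ` with
`∑_{c∈C} e^{2πi c / p^{i_k}} = 0` for all `k`, then `#C = p^n` and for every `0 ≤ m ≤ γ` the
image of `C` in `ℤ/p^mℤ` has cardinality `p^{#{k : i_k ≤ m}}`. -/
theorem zmod_vanishing_implies_pHomogeneous
    (p γ n : ℕ) [Fact p.Prime] (hγ : 1 ≤ γ) (hn1 : 1 ≤ n) (hnγ : n ≤ γ)
    (C : Finset (ZMod (p ^ γ))) (hCne : C.Nonempty)
    (hcard : C.card ≤ p ^ n)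
    (i : Fin n → ℕ) (hmono : StrictMono i)
    (hi1 : ∀ k, 1 ≤ i k) (hiγ : ∀ k, i k ≤ γ)
    (hsum : ∀ k : Fin n,
      ∑ c ∈ C, Complex.exp (2 * Real.pi * Complex.I * ((c.val : ℂ) / (p : ℂ) ^ (i k))) = 0) :
    C.card = p ^ n ∧
    ∀ m : ℕ, ∀ hm : m ≤ γ,
      (C.image (ZMod.castHom (pow_dvd_pow p hm) (ZMod (p ^ m)))).card =
        p ^ (Finset.univ.filter (fun k : Fin n => i k ≤ m)).card := by
  have hp : p.Prime := Fact.out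
  have hp0 : 0 < p := hp.pos
  haveI : NeZero (p ^ γ) := ⟨(pow_pos hp0 γ).ne'⟩
  set a : ℕ → ℕ := fun m =>
    ((Finset.range (p ^ m)).filter fun e => ∃ c ∈ C, c.val % p ^ m = e).card with ha
  set f : ℕ → ℕ := fun m => (Finset.univ.filter fun k : Fin n => i k ≤ m).card with hf
  obtain ⟨c₀, hc₀⟩ := hCne
  have hane : ∀ m, 1 ≤ a m := by
    intro m
    refine Finset.card_pos.mpr ⟨c₀.val % p ^ m, Finset.mem_filter.mpr ⟨?_, c₀, hc₀, rfl⟩⟩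
    exact Finset.mem_range.mpr (Nat.mod_lt _ (pow_pos hp0 m))
  have hmono_a : ∀ {m m' : ℕ}, m ≤ m' → a m ≤ a m' := fun h => S_mono p γ hp0 C h
  have hdbl : ∀ k : Fin n, a (i k) = p * a (i k - 1) :=
    fun k => S_card_mul p γ (i k) hp (hi1 k) C
      (level_count p γ hp (i k) (hi1 k) C (hsum k))
  have haγ : a γ = C.card := by
    have hSet : ((Finset.range (p ^ γ)).filter fun e => ∃ c ∈ C, c.val % p ^ γ = e)
        = C.image ZMod.val := by
      ext e
      simp only [Finset.mem_filter, Finset.mem_range, Finset.mem_image]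
      constructor
      · rintro ⟨he, c, hc, hce⟩
        exact ⟨c, hc, by rw [← hce, Nat.mod_eq_of_lt (ZMod.val_lt c)]⟩
      · rintro ⟨c, hc, rfl⟩
        exact ⟨ZMod.val_lt c, c, hc, Nat.mod_eq_of_lt (ZMod.val_lt c)⟩
    rw [ha]; simp only
    rw [hSet, Finset.card_image_of_injective _ (ZMod.val_injective _)]
  have hfle : ∀ m, f m ≤ n := fun m =>
    le_trans (Finset.card_filter_le Finset.univ (fun k : Fin n => i k ≤ m))
      (le_of_eq (by simp))
  have hfγ : f γ = n := by
    rw [hf]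
    simp only
    rw [Finset.filter_true_of_mem fun k _ => hiγ k]
    simp
  -- lower bound
  have hC1 : ∀ d m, m ≤ γ → m ≤ d → p ^ f m ≤ a m := by
    intro d
    induction d with
    | zero =>
        intro m hmγ hm0
        have hm : m = 0 := by omega
        subst hm
        have hf0 : f 0 = 0 := by
          rw [hf]; simp only [Finset.card_eq_zero]
          refine Finset.filter_false_of_mem fun k _ => by have := hi1 k; omega
        rw [hf0, pow_zero]
        exact hane 0
    | succ d ih =>
        intro m hmγ hmd
        by_cases hem : (Finset.univ.filter fun k : Fin n => i k ≤ m).Nonempty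
        · set ks := (Finset.univ.filter fun k : Fin n => i k ≤ m).max' hem with hks
          have hksmem := (Finset.univ.filter fun k : Fin n => i k ≤ m).max'_mem hem
          have hik : i ks ≤ m := (Finset.mem_filter.mp hksmem).2
          have hsub : (Finset.univ.filter fun k : Fin n => i k ≤ m)
              ⊆ insert ks (Finset.univ.filter fun k : Fin n => i k ≤ i ks - 1) := by
            intro k hk
            rcases eq_or_ne k ks with rfl | hne
            · exact Finset.mem_insert_self _ _
            · refine Finset.mem_insert_of_mem (Finset.mem_filter.mpr ⟨Finset.mem_univ _, ?_⟩)
              have hkle : k ≤ ks := Finset.le_max' _ _ hk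
              have hlt := hmono (lt_of_le_of_ne hkle hne)
              omega
          have hfm : f m ≤ f (i ks - 1) + 1 :=
            le_trans (Finset.card_le_card hsub) (Finset.card_insert_le _ _)
          have hih := ih (i ks - 1) (by have := hiγ ks; omega) (by have := hi1 ks; omega)
          calc p ^ f m ≤ p ^ (f (i ks - 1) + 1) := Nat.pow_le_pow_right hp0 hfm
            _ = p * p ^ f (i ks - 1) := by rw [pow_succ]; ring
            _ ≤ p * a (i ks - 1) := Nat.mul_le_mul_left p hih
            _ = a (i ks) := (hdbl ks).symm
            _ ≤ a m := hmono_a hik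
        · have hf0 : f m = 0 := by
            rw [hf]; simp only [Finset.card_eq_zero]
            exact Finset.not_nonempty_iff_eq_empty.mp hem
          rw [hf0, pow_zero]
          exact hane m
  -- upper bound ingredient
  have hC2 : ∀ d m, m ≤ γ → n - f m ≤ d → p ^ (n - f m) * a m ≤ a γ := by
    intro d
    induction d with
    | zero =>
        intro m hmγ h0
        have : n - f m = 0 := by omega
        rw [this, pow_zero, one_mul]
        exact hmono_a hmγ
    | succ d ih =>
        intro m hmγ hd
        by_cases hfm : n ≤ f m
        · have : n - f m = 0 := by omega
          rw [this, pow_zero, one_mul]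
          exact hmono_a hmγ
        · have hne : (Finset.univ.filter fun k : Fin n => m < i k).Nonempty := by
            by_contra hcon
            rw [Finset.not_nonempty_iff_eq_empty, Finset.filter_eq_empty_iff] at hcon
            have hall : ∀ k : Fin n, i k ≤ m := fun k => by
              have := hcon (Finset.mem_univ k); omega
            have : f m = n := by
              rw [hf]; simp only
              rw [Finset.filter_true_of_mem fun k _ => hall k]
              simp
            omega
          set k₀ := (Finset.univ.filter fun k : Fin n => m < i k).min' hne with hk₀def
          have hk₀mem := (Finset.univ.filter fun k : Fin n => m < i k).min'_mem hne
          have hk₀ : m < i k₀ := (Finset.mem_filter.mp hk₀mem).2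
          have hswap : (Finset.univ.filter fun k : Fin n => i k ≤ i k₀)
              ⊆ insert k₀ (Finset.univ.filter fun k : Fin n => i k ≤ m) := by
            intro k hk
            rcases eq_or_ne k k₀ with rfl | hne'
            · exact Finset.mem_insert_self _ _
            have hik : i k ≤ i k₀ := (Finset.mem_filter.mp hk).2
            by_cases h2 : i k ≤ m
            · exact Finset.mem_insert_of_mem (Finset.mem_filter.mpr ⟨Finset.mem_univ _, h2⟩)
            · exfalso
              have hkmem : k ∈ Finset.univ.filter fun k : Fin n => m < i k :=
                Finset.mem_filter.mpr ⟨Finset.mem_univ _, by omega⟩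
              have hle : k₀ ≤ k := Finset.min'_le _ _ hkmem
              exact hne' (hmono.injective (le_antisymm hik (hmono.monotone hle)))
          have hfk1 : f (i k₀) ≤ f m + 1 :=
            le_trans (Finset.card_le_card hswap) (Finset.card_insert_le _ _)
          have hfgt : f m < f (i k₀) := by
            rw [hf]; simp only
            apply Finset.card_lt_card
            constructor
            · intro k hk
              have := (Finset.mem_filter.mp hk).2
              exact Finset.mem_filter.mpr ⟨Finset.mem_univ _, by omega⟩
            · intro hcon
              have := Finset.mem_filter.mp (hcon (Finset.mem_filter.mpr
                ⟨Finset.mem_univ k₀, le_refl _⟩))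
              omega
          have hfeq : f (i k₀) = f m + 1 := by omega
          have h1 := ih (i k₀) (hiγ k₀) (by omega)
          have h2 : p * a m ≤ a (i k₀) := by
            rw [hdbl k₀]
            exact Nat.mul_le_mul_left p (hmono_a (by omega : m ≤ i k₀ - 1))
          calc p ^ (n - f m) * a m = p ^ (n - f (i k₀)) * (p * a m) := by
                rw [hfeq, show n - f m = (n - (f m + 1)) + 1 by omega, pow_succ]; ring
            _ ≤ p ^ (n - f (i k₀)) * a (i k₀) := Nat.mul_le_mul_left _ h2
            _ ≤ a γ := h1
  have hcard' : C.card = p ^ n := by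
    refine le_antisymm hcard ?_
    rw [← haγ]
    have := hC1 γ γ le_rfl le_rfl
    rwa [hfγ] at this
  have hAm : ∀ m, m ≤ γ → a m = p ^ f m := by
    intro m hm
    refine le_antisymm ?_ (hC1 m m hm le_rfl)
    have h1 := hC2 n m hm (by omega)
    rw [haγ, hcard'] at h1
    have h2 : p ^ n = p ^ (n - f m) * p ^ f m := by
      rw [← pow_add]
      congr 1
      have := hfle m
      omega
    rw [h2] at h1
    exact Nat.le_of_mul_le_mul_left h1 (pow_pos hp0 _)
  refine ⟨hcard', fun m hm => ?_⟩
  have himeq : C.image (ZMod.castHom (pow_dvd_pow p hm) (ZMod (p ^ m)))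
      = C.image fun c => ((c.val : ZMod (p ^ m))) := by
    refine Finset.image_congr fun c _ => ?_
    rw [ZMod.castHom_apply, ← ZMod.natCast_val]
  rw [himeq, card_image_eq_card_S p γ m hp0 C]
  have := hAm m hm
  rw [ha] at this
  simp only at this
  rw [this, hf]
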